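/- Let n₀ and d be real constants with n₀ ≥ d ≥ 0 and n₀ > 0. Then for every real n ≥ n₀, 1/(1 + 1/((1+d/n)^n - 1)) ≥ (1/(1 + 1/(e^d - 1))) · (1 - (1/n) · n₀(exp(d²/n₀) - 1)/(exp(d) - 1)), provided d > 0 so all denominators are positive. -/

import Mathlib

theorem stmt_3 (n₀ d : ℝ) (hd : 0 < d) (hn₀d : d ≤ n₀) (hn₀ : 0 < n₀)
    (n : ℝ) (hn : n₀ ≤ n) :
    1 / (1 + 1 / ((1 + d / n) ^ (n : ℝ) - 1)) ≥
      (1 / (1 + 1 / (Real.exp d - 1))) *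
        (1 - (1 / n) * (n₀ * (Real.exp (d ^ 2 / n₀) - 1) / (Real.exp d - 1))) := by
  have hn0 : (0:ℝ) < n := lt_of_lt_of_le hn₀ hn
  have hx : 0 < d / n := div_pos hd hn0
  have hb : (0:ℝ) < 1 + d / n := by linarith
  set A := (1 + d / n) ^ (n : ℝ) with hAdef
  set E := Real.exp d with hEdef
  have hE1 : 1 < E := by
    rw [hEdef, show (1:ℝ) = Real.exp 0 by simp]
    exact Real.exp_lt_exp.mpr hd
  have hA1 : 1 < A := by
    rw [hAdef]
    exact Real.one_lt_rpow_iff_of_pos hb |>.mpr (Or.inl ⟨by linarith, hn0⟩)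
  have hAexp : A = Real.exp (n * Real.log (1 + d / n)) := by
    rw [hAdef, Real.rpow_def_of_pos hb]
    ring_nf
  -- log bounds
  have hlogup : Real.log (1 + d / n) ≤ d / n := by
    have := Real.log_le_sub_one_of_pos hb
    linarith
  have hlogdown : d / n - (d / n) ^ 2 ≤ Real.log (1 + d / n) := by
    have h := Real.log_le_sub_one_of_pos (show (0:ℝ) < (1 + d/n)⁻¹ by positivity)
    rw [Real.log_inv] at h
    have h2 : 1 - (1 + d/n)⁻¹ ≤ Real.log (1 + d/n) := by linarith
    have h3 : d / n - (d / n) ^ 2 ≤ 1 - (1 + d/n)⁻¹ := by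
      have he : 1 - (1 + d/n)⁻¹ = (d/n)/(1 + d/n) := by field_simp; ring
      rw [he, le_div_iff₀ hb]
      nlinarith [pow_pos hx 3]
    linarith
  have hAup : A ≤ E := by
    rw [hAexp, hEdef]
    apply Real.exp_le_exp.mpr
    calc n * Real.log (1 + d/n) ≤ n * (d/n) := by
          exact mul_le_mul_of_nonneg_left hlogup (le_of_lt hn0)
      _ = d := by field_simp
  have hAdown : Real.exp (d - d^2 / n) ≤ A := by
    rw [hAexp]
    apply Real.exp_le_exp.mpr
    have : d - d^2/n = n * (d/n - (d/n)^2) := by field_simp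
    rw [this]
    exact mul_le_mul_of_nonneg_left hlogdown (le_of_lt hn0)
  -- key: E ≤ A * exp(d²/n)
  have hK : E ≤ A * Real.exp (d^2 / n) := by
    have := mul_le_mul_of_nonneg_right hAdown (le_of_lt (Real.exp_pos (d^2/n)))
    rw [← Real.exp_add] at this
    have he : d - d^2/n + d^2/n = d := by ring
    rw [he] at this
    exact this
  -- convexity: exp(d²/n) - 1 ≤ (n₀/n) (exp(d²/n₀) - 1)
  have hC : n * (Real.exp (d^2/n) - 1) ≤ n₀ * (Real.exp (d^2/n₀) - 1) := by
    have hy : 0 < d^2 / n₀ := by positivity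
    have hxy : d^2 / n ≤ d^2 / n₀ := by
      apply div_le_div_of_nonneg_left (by positivity) hn₀ hn
    set a : ℝ := 1 - (d^2/n) / (d^2/n₀)
    set b : ℝ := (d^2/n) / (d^2/n₀)
    have hb0 : 0 ≤ b := by positivity
    have hab : a + b = 1 := by simp [a, b]
    have ha0 : 0 ≤ a := by
      simp only [a, sub_nonneg]
      rw [div_le_one hy]; exact hxy
    have hconv := convexOn_exp.2 (Set.mem_univ 0) (Set.mem_univ (d^2/n₀)) ha0 hb0 hab
    simp only [smul_eq_mul, mul_zero, zero_add, Real.exp_zero, mul_one] at hconv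
    have hbval : b = n₀ / n := by
      simp only [b]
      rw [div_div_div_comm]
      rw [div_self (by positivity : d^2 ≠ 0), one_div_div]
    rw [hbval] at hconv hab
    have ha' : a = 1 - n₀/n := by rw [← hab]; ring
    rw [ha'] at hconv
    have : Real.exp (d^2/n) ≤ Real.exp (n₀/n * (d^2/n₀)) := by
      apply Real.exp_le_exp.mpr
      have : n₀/n * (d^2/n₀) = d^2/n := by field_simp
      rw [this]
    have h2 : Real.exp (d^2/n) ≤ 1 - n₀/n + n₀/n * Real.exp (d^2/n₀) := le_trans this hconv
    have h3 := mul_le_mul_of_nonneg_left h2 (le_of_lt hn0)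
    calc n * (Real.exp (d^2/n) - 1) = n * Real.exp (d^2/n) - n := by ring
      _ ≤ n * (1 - n₀/n + n₀/n * Real.exp (d^2/n₀)) - n := by linarith
      _ = n₀ * (Real.exp (d^2/n₀) - 1) := by field_simp; ring
  -- final assembly
  have hA0 : (0:ℝ) < A := by linarith
  have hE0 : (0:ℝ) < E := by linarith
  have hAm1 : (0:ℝ) < A - 1 := by linarith
  have hEm1 : (0:ℝ) < E - 1 := by linarith
  have hQ : (0:ℝ) < Real.exp (d^2/n) := Real.exp_pos _
  have hP : (0:ℝ) ≤ Real.exp (d^2/n₀) - 1 := by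
    have : (1:ℝ) = Real.exp 0 := by simp
    rw [this]
    exact sub_nonneg.mpr (Real.exp_le_exp.mpr (by positivity))
  rw [ge_iff_le]
  have hL : 1 / (1 + 1 / (A - 1)) = (A - 1) / A := by
    rw [one_div, one_div, eq_div_iff (ne_of_gt hA0)]
    field_simp
    ring
  have hR : 1 / (1 + 1 / (E - 1)) = (E - 1) / E := by
    rw [one_div, one_div, eq_div_iff (ne_of_gt hE0)]
    field_simp
    ring
  rw [hL, hR]
  rw [div_mul_eq_mul_div, div_le_div_iff₀ hE0 hA0]
  have hKA : E - A ≤ A * (Real.exp (d^2/n) - 1) := by nlinarith [hK]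
  have expand : (E - 1) * (1 - 1/n * (n₀ * (Real.exp (d^2/n₀) - 1) / (E - 1))) * A
      = (E-1) * A - A * (n₀ * (Real.exp (d^2/n₀) - 1)) / n := by
    field_simp
  rw [expand]
  have h4 : A * (Real.exp (d^2/n) - 1) ≤ A * (n₀ * (Real.exp (d^2/n₀) - 1)) / n := by
    rw [le_div_iff₀ hn0]
    nlinarith [hC, hA0.le]
  linarith [hKA, h4]
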